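/- arXiv:1705.03911 — 3 statements merged into one kernel-verified Lean document; each statement's English description precedes it below -/
import Mathlib

section
/- The plane through the origin containing the Laguerre bisector $B_L(\tilde{c}_i, \tilde{c}_j)$, namely the plane with normal vector $\mathbf{n} = \sec(r_i)\mathbf{x}_i - \sec(r_j)\mathbf{x}_j$, is orthogonal at each intersection point to the great circle through the two centers $p_i$ and $p_j$; i.e., if $\mathbf{x} \in U$ satisfies $\mathbf{n}^T\mathbf{x} = 0$ and $\mathbf{x}$ lies in the plane spanned by $\mathbf{x}_i$ and $\mathbf{x}_j$, then the tangent vector of the great circle through $p_i, p_j$ at $\mathbf{x}$ is orthogonal to the tangent vector of the bisector great circle at $\mathbf{x}$. -/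
open scoped RealInnerProductSpace

/-- The Laguerre bisector great circle crosses the great circle through the two
centers at right angles: at a common point `x`, any tangent vector `u` of the
great circle through the centers (i.e. `u ∈ span {xᵢ, xⱼ}`, `u ⊥ x`) is
orthogonal to any tangent vector `w` of the bisector great circle
(i.e. `w ⊥ n`, `w ⊥ x`, where `n = sec rᵢ • xᵢ - sec rⱼ • xⱼ`). -/
theorem laguerre_bisector_orthogonal_to_center_circle
    (xi xj x : EuclideanSpace ℝ (Fin 3)) (ri rj : ℝ)
    (hxi : ‖xi‖ = 1) (hxj : ‖xj‖ = 1)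
    (hind : LinearIndependent ℝ ![xi, xj])
    (hri : ri ∈ Set.Ico 0 (Real.pi / 2)) (hrj : rj ∈ Set.Ico 0 (Real.pi / 2))
    (hx : ‖x‖ = 1)
    (hxspan : x ∈ Submodule.span ℝ {xi, xj})
    (hxbis : ⟪(Real.cos ri)⁻¹ • xi - (Real.cos rj)⁻¹ • xj, x⟫ = 0) :
    ∀ u w : EuclideanSpace ℝ (Fin 3),
      u ∈ Submodule.span ℝ {xi, xj} → ⟪u, x⟫ = 0 →
      ⟪(Real.cos ri)⁻¹ • xi - (Real.cos rj)⁻¹ • xj, w⟫ = 0 → ⟪w, x⟫ = 0 →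
      ⟪u, w⟫ = 0 := by
  intro u w huspan hux hnw hwx
  set n : EuclideanSpace ℝ (Fin 3) := (Real.cos ri)⁻¹ • xi - (Real.cos rj)⁻¹ • xj with hn
  have hpi := Real.pi_pos
  have hci : Real.cos ri ≠ 0 := by
    have := Real.cos_pos_of_mem_Ioo (show ri ∈ Set.Ioo (-(Real.pi/2)) (Real.pi/2) from
      ⟨by linarith [hri.1], hri.2⟩)
    linarith
  have hcj : Real.cos rj ≠ 0 := by
    have := Real.cos_pos_of_mem_Ioo (show rj ∈ Set.Ioo (-(Real.pi/2)) (Real.pi/2) from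
      ⟨by linarith [hrj.1], hrj.2⟩)
    linarith
  have hpair := LinearIndependent.pair_iff.mp hind
  have hnne : n ≠ 0 := by
    intro h
    have := (hpair ((Real.cos ri)⁻¹) (-(Real.cos rj)⁻¹) (by
      rw [neg_smul, ← sub_eq_add_neg]; exact h)).1
    exact (inv_ne_zero hci) this
  have hxne : x ≠ 0 := by
    intro h; rw [h, norm_zero] at hx; norm_num at hx
  have hnx : ⟪n, x⟫ = 0 := hxbis
  -- x and n are linearly independent
  have hindxn : LinearIndependent ℝ ![x, n] := by
    rw [LinearIndependent.pair_iff]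
    intro s t hst
    have h1 : ⟪s • x + t • n, x⟫ = 0 := by rw [hst, inner_zero_left]
    rw [inner_add_left, real_inner_smul_left, real_inner_smul_left,
      real_inner_self_eq_norm_sq, hx, hnx] at h1
    have hs : s = 0 := by simpa using h1
    subst hs
    have ht : t = 0 := by
      rcases (show t = 0 ∨ n = 0 by simpa using hst) with h | h
      · exact h
      · exact absurd h hnne
    exact ⟨rfl, ht⟩
  -- n ∈ span {xi, xj}
  have hnspan : n ∈ Submodule.span ℝ ({xi, xj} : Set (EuclideanSpace ℝ (Fin 3))) := by
    apply Submodule.sub_mem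
    · exact Submodule.smul_mem _ _ (Submodule.subset_span (by simp))
    · exact Submodule.smul_mem _ _ (Submodule.subset_span (by simp))
  have hle : Submodule.span ℝ ({x, n} : Set (EuclideanSpace ℝ (Fin 3))) ≤
      Submodule.span ℝ ({xi, xj} : Set (EuclideanSpace ℝ (Fin 3))) := by
    rw [Submodule.span_le]
    intro v hv
    rcases hv with h | h
    · exact h ▸ hxspan
    · simp only [Set.mem_singleton_iff] at h; exact h ▸ hnspan
  have hrank1 : Module.finrank ℝ (Submodule.span ℝ ({xi, xj} : Set (EuclideanSpace ℝ (Fin 3)))) = 2 := by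
    have h := finrank_span_eq_card hind
    have hr : Set.range ![xi, xj] = ({xi, xj} : Set (EuclideanSpace ℝ (Fin 3))) := by
      ext v; simp [Fin.exists_fin_two, or_comm]
    rwa [hr] at h
  have hrank2 : Module.finrank ℝ (Submodule.span ℝ ({x, n} : Set (EuclideanSpace ℝ (Fin 3)))) = 2 := by
    have h := finrank_span_eq_card hindxn
    have hr : Set.range ![x, n] = ({x, n} : Set (EuclideanSpace ℝ (Fin 3))) := by
      ext v; simp [Fin.exists_fin_two, or_comm]
    rwa [hr] at h
  have heq : Submodule.span ℝ ({x, n} : Set (EuclideanSpace ℝ (Fin 3))) =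
      Submodule.span ℝ ({xi, xj} : Set (EuclideanSpace ℝ (Fin 3))) :=
    Submodule.eq_of_le_of_finrank_le hle (by rw [hrank1, hrank2])
  rw [← heq] at huspan
  rcases Submodule.mem_span_pair.mp huspan with ⟨a, b, hab⟩
  have ha : a = 0 := by
    have h1 : ⟪a • x + b • n, x⟫ = 0 := by rw [hab]; exact hux
    rw [inner_add_left, real_inner_smul_left, real_inner_smul_left,
      real_inner_self_eq_norm_sq, hx, hnx] at h1
    simpa using h1
  subst ha
  rw [← hab, zero_smul, zero_add, real_inner_smul_left, hnw, mul_zero]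
end

section
/- Let $\tilde{c}_i, \tilde{c}_j, \tilde{c}_k$ be three spherical circles on $U$ with planes $\pi(\tilde{c}_i), \pi(\tilde{c}_j), \pi(\tilde{c}_k)$ intersecting pairwise in lines $\ell_{i,j}, \ell_{j,k}, \ell_{i,k}$. If the three Laguerre bisector great circles $B_L(\tilde{c}_i,\tilde{c}_j)$, $B_L(\tilde{c}_j,\tilde{c}_k)$, $B_L(\tilde{c}_i,\tilde{c}_k)$ have a common point $v \in U$, then the three planes $\pi(\tilde{c}_i), \pi(\tilde{c}_j), \pi(\tilde{c}_k)$ have a common point $V$ lying on the ray (or line) through the origin and $v$, provided the three centers $\mathbf{x}_i, \mathbf{x}_j, \mathbf{x}_k$ are linearly independent. -/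
open scoped RealInnerProductSpace

/-- If the three Laguerre bisector great circles of three spherical circles
with linearly independent centers have a common point `v` on the unit sphere,
then the three planes `π(c̃ᵢ), π(c̃ⱼ), π(c̃ₖ)` have a common point `V = t • v`
lying on the line through the origin and `v`. -/
theorem bisectors_concurrent_implies_planes_concurrent
    (x : Fin 3 → EuclideanSpace ℝ (Fin 3)) (r : Fin 3 → ℝ)
    (hx : ∀ m, ‖x m‖ = 1) (hr : ∀ m, r m ∈ Set.Ico 0 (Real.pi / 2))
    (hind : LinearIndependent ℝ x)
    (v : EuclideanSpace ℝ (Fin 3)) (hv : ‖v‖ = 1)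
    (hbis : ∀ m m' : Fin 3,
      ⟪x m, v⟫ / Real.cos (r m) = ⟪x m', v⟫ / Real.cos (r m')) :
    ∃ t : ℝ, t ≠ 0 ∧ ∀ m : Fin 3, ⟪x m, t • v⟫ = Real.cos (r m) := by
  have hcos : ∀ m, 0 < Real.cos (r m) := fun m =>
    Real.cos_pos_of_mem_Ioo ⟨lt_of_lt_of_le (by linarith [Real.pi_pos]) (hr m).1, (hr m).2⟩
  set c : ℝ := ⟪x 0, v⟫ / Real.cos (r 0) with hc
  have hval : ∀ m, ⟪x m, v⟫ = c * Real.cos (r m) := by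
    intro m
    have h := hbis m 0
    rw [← hc] at h
    rw [div_eq_iff (hcos m).ne'] at h
    exact h
  have hcne : c ≠ 0 := by
    intro h0
    have horth : ∀ m, ⟪x m, v⟫ = 0 := by
      intro m; rw [hval m, h0]; ring
    have hspan : Submodule.span ℝ (Set.range x) = ⊤ := by
      apply LinearIndependent.span_eq_top_of_card_eq_finrank hind
      simp [finrank_euclideanSpace]
    have hvz : v = 0 := by
      have : ∀ w ∈ Submodule.span ℝ (Set.range x), ⟪w, v⟫ = 0 := by
        intro w hw
        induction hw using Submodule.span_induction with
        | mem y hy => obtain ⟨m, rfl⟩ := hy; exact horth m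
        | zero => simp
        | add a b _ _ ha hb => rw [inner_add_left, ha, hb]; ring
        | smul a y _ hy => rw [inner_smul_left, hy]; simp
      have := this v (by rw [hspan]; trivial)
      exact inner_self_eq_zero.mp this
    rw [hvz, norm_zero] at hv
    norm_num at hv
  refine ⟨1 / c, by simpa using hcne, fun m => ?_⟩
  rw [inner_smul_right, hval m]
  field_simp
end

section
/- Let $\mathcal{P}$ and $\mathcal{P}'$ be two tetrahedra in $\mathbb{R}^3$, each containing the origin $O$ in its interior, such that corresponding vertices lie on the same rays from the origin: vertex $v_m'$ of $\mathcal{P}'$ equals $\lambda_m v_m$ for some $\lambda_m > 0$, $m = 1,2,3,4$, where $v_1,\dots,v_4$ are the vertices of $\mathcal{P}$ (affinely independent). Then there is a projective transformation of the form $f(\mathbf{x}) = \frac{\eta}{\alpha + \mathbf{w}^T\mathbf{x}}\mathbf{x}$ (with $\alpha, \eta \neq 0$, $\mathbf{w} \in \mathbb{R}^3$) mapping $v_m$ to $v_m'$ for all $m$. -/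
open scoped RealInnerProductSpace

/-- If two tetrahedra containing the origin in their interiors have
corresponding vertices on the same rays from the origin (`v'ₘ = λₘ • vₘ`,
`λₘ > 0`), then some projection-preserving projective transformation
`f(x) = (η / (α + ⟪w, x⟫)) • x` maps `vₘ` to `v'ₘ` for all `m`. -/
theorem projective_map_between_radial_tetrahedra
    (v : Fin 4 → EuclideanSpace ℝ (Fin 3))
    (hindep : AffineIndependent ℝ v)
    (lam : Fin 4 → ℝ) (hlam : ∀ m, 0 < lam m)
    (hO : (0 : EuclideanSpace ℝ (Fin 3)) ∈
      interior (convexHull ℝ (Set.range v)))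
    (hO' : (0 : EuclideanSpace ℝ (Fin 3)) ∈
      interior (convexHull ℝ (Set.range (fun m => lam m • v m)))) :
    ∃ (α η : ℝ) (w : EuclideanSpace ℝ (Fin 3)), α ≠ 0 ∧ η ≠ 0 ∧
      ∀ m : Fin 4, α + ⟪w, v m⟫ ≠ 0 ∧
        (η / (α + ⟪w, v m⟫)) • v m = lam m • v m := by
  classical
  have hcard : Fintype.card (Fin 4)
      = Module.finrank ℝ (EuclideanSpace ℝ (Fin 3)) + 1 := by
    rw [Fintype.card_fin, finrank_euclideanSpace_fin]
  have hspan : affineSpan ℝ (Set.range v) = ⊤ :=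
    hindep.affineSpan_eq_top_iff_card_eq_finrank_add_one.mpr hcard
  let b : AffineBasis (Fin 4) ℝ (EuclideanSpace ℝ (Fin 3)) := ⟨v, hindep, hspan⟩
  have hb : ⇑b = v := rfl
  have hpos : ∀ i, 0 < b.coord i 0 := by
    have := b.interior_convexHull
    rw [hb] at this
    rw [this] at hO
    exact hO
  -- the linear functional
  set φ : EuclideanSpace ℝ (Fin 3) →ₗ[ℝ] ℝ :=
    ∑ k, (lam k)⁻¹ • (b.coord k).linear with hφ
  set α : ℝ := ∑ k, (lam k)⁻¹ * b.coord k 0 with hα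
  set w : EuclideanSpace ℝ (Fin 3) :=
    (InnerProductSpace.toDual ℝ (EuclideanSpace ℝ (Fin 3))).symm
      { toLinearMap := φ, cont := φ.continuous_of_finiteDimensional } with hw
  have hwx : ∀ x, ⟪w, x⟫ = φ x := fun x =>
    InnerProductSpace.toDual_symm_apply
  have hαpos : 0 < α := by
    apply Finset.sum_pos
    · intro k _
      exact mul_pos (inv_pos.mpr (hlam k)) (hpos k)
    · exact Finset.univ_nonempty
  have hlin : ∀ k x, (b.coord k).linear x = b.coord k x - b.coord k 0 := by
    intro k x
    have := (b.coord k).map_vadd 0 x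
    simp at this
    simp [this]
  have key : ∀ m, α + ⟪w, v m⟫ = (lam m)⁻¹ := by
    intro m
    rw [hwx]
    have : φ (v m) = ∑ k, (lam k)⁻¹ * (b.coord k (v m) - b.coord k 0) := by
      rw [hφ]
      simp only [LinearMap.coe_sum, Finset.sum_apply, LinearMap.smul_apply, smul_eq_mul]
      exact Finset.sum_congr rfl fun k _ => by rw [hlin]
    rw [this, hα, ← Finset.sum_add_distrib]
    have : ∀ k, (lam k)⁻¹ * b.coord k 0 + (lam k)⁻¹ * (b.coord k (v m) - b.coord k 0)
        = (lam k)⁻¹ * b.coord k (v m) := by intro k; ring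
    rw [Finset.sum_congr rfl fun k _ => this k]
    have hcoord : ∀ k, b.coord k (v m) = if k = m then 1 else 0 := by
      intro k
      rw [← hb]
      rw [b.coord_apply]
    simp [hcoord]
  refine ⟨α, 1, w, ne_of_gt hαpos, one_ne_zero, fun m => ?_⟩
  rw [key m]
  refine ⟨inv_ne_zero (ne_of_gt (hlam m)), ?_⟩
  rw [one_div, inv_inv]
end
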